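/- The basic sorting operators τ̄_i on ℝ^n (swap coordinates i, i+1 if x_i < x_{i+1}, otherwise fix) satisfy the braid relation τ̄_i ∘ τ̄_{i+1} ∘ τ̄_i = τ̄_{i+1} ∘ τ̄_i ∘ τ̄_{i+1} for i = 1,...,n-2. -/

import Mathlib

open Classical in
/-- The basic sorting operator on `ℝⁿ`: swaps coordinates `i, j` if `x i < x j`,
and fixes `x` otherwise. -/
noncomputable def tauUp {n : ℕ} (i j : Fin n) (x : Fin n → ℝ) : Fin n → ℝ :=
  if x i < x j then x ∘ Equiv.swap i j else x

lemma tauUp_braid_aux {n : ℕ} (a b c : Fin n) (hab : a ≠ b) (hac : a ≠ c) (hbc : b ≠ c) :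
    tauUp a b ∘ tauUp b c ∘ tauUp a b = tauUp b c ∘ tauUp a b ∘ tauUp b c := by
  have hba := hab.symm; have hca := hac.symm; have hcb := hbc.symm
  funext x
  simp only [Function.comp_apply]
  unfold tauUp
  split_ifs with h1 h2 h3 h4 h5 h6 h7 h8 h9 h10 h11 h12 h13 h14 <;>
  · simp only [Function.comp_apply, Equiv.swap_apply_left, Equiv.swap_apply_right,
      Equiv.swap_apply_of_ne_of_ne hca hcb, Equiv.swap_apply_of_ne_of_ne hab hac] at * <;>
    first
    | rfl
    | (funext k
       simp only [Function.comp_apply]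
       rcases eq_or_ne k a with rfl | ka <;> rcases eq_or_ne k b with rfl | kb <;>
         rcases eq_or_ne k c with rfl | kc <;>
         simp_all [Equiv.swap_apply_left, Equiv.swap_apply_right, Equiv.swap_apply_of_ne_of_ne] <;>
         linarith)

/-- The basic sorting operators on `ℝⁿ` satisfy the braid relation
`τ̄_i ∘ τ̄_{i+1} ∘ τ̄_i = τ̄_{i+1} ∘ τ̄_i ∘ τ̄_{i+1}`. -/
theorem tauUp_braid (n i : ℕ) (hi : i + 2 < n) :
    tauUp (⟨i, by omega⟩ : Fin n) ⟨i + 1, by omega⟩ ∘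
        tauUp ⟨i + 1, by omega⟩ ⟨i + 2, hi⟩ ∘
        tauUp ⟨i, by omega⟩ ⟨i + 1, by omega⟩
      = tauUp ⟨i + 1, by omega⟩ ⟨i + 2, hi⟩ ∘
          tauUp ⟨i, by omega⟩ ⟨i + 1, by omega⟩ ∘
          tauUp ⟨i + 1, by omega⟩ ⟨i + 2, hi⟩ := by
  exact tauUp_braid_aux _ _ _ (by simp [Fin.ext_iff]) (by simp [Fin.ext_iff])
    (by simp [Fin.ext_iff])
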